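/- For a > 0, define A(a) = Σ_{k∈ℤ} exp(−a k²) and B(a) = Σ_{k∈ℤ} exp(−a (k + 1/2)²). Then A(a)/B(a) − 1 ~ 4·exp(−π²/a) as a → 0⁺, i.e., (A(a)/B(a) − 1)/exp(−π²/a) → 4. -/

import Mathlib

open Real Filter

-- Summability of Gaussian-type series over ℕ
lemma aux_sumN (t c : ℝ) (ht : 0 < t) (hc : 0 ≤ c) :
    Summable (fun n : ℕ => Real.exp (-t * ((n:ℝ) + c)^2)) := by
  apply Summable.of_nonneg_of_le (fun n => (Real.exp_pos _).le)
    (fun n => ?_) (summable_geometric_of_lt_one (Real.exp_pos (-t)).le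
      (Real.exp_lt_one_iff.mpr (neg_lt_zero.mpr ht)))
  rw [← Real.exp_nat_mul]
  apply Real.exp_le_exp.mpr
  have h : (n:ℝ) ≤ ((n:ℝ) + c)^2 := by
    have h1 : (n:ℝ) ≤ (n:ℝ)^2 := by
      have := Nat.le_self_pow (two_ne_zero) n
      exact_mod_cast this
    nlinarith [Nat.cast_nonneg (α := ℝ) n]
  nlinarith

lemma aux_sumZ (t : ℝ) (ht : 0 < t) :
    Summable (fun k : ℤ => Real.exp (-t * (k:ℝ)^2)) := by
  apply Summable.of_nat_of_neg_add_one
  · simpa using aux_sumN t 0 ht le_rfl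
  · have := aux_sumN t 1 ht zero_le_one
    apply this.congr
    intro n
    push_cast
    ring_nf

lemma aux_sumZ' (t : ℝ) (ht : 0 < t) :
    Summable (fun k : ℤ => (-1:ℝ)^k * Real.exp (-t * (k:ℝ)^2)) := by
  apply Summable.of_abs
  have : (fun k : ℤ => |(-1:ℝ)^k * Real.exp (-t * (k:ℝ)^2)|)
      = fun k : ℤ => Real.exp (-t * (k:ℝ)^2) := by
    funext k
    rw [abs_mul, abs_of_pos (Real.exp_pos _)]
    have : |(-1:ℝ)^k| = 1 := by
      rcases Int.even_or_odd k with h | h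
      · rw [h.neg_one_zpow]; simp
      · rw [h.neg_one_zpow]; simp
    rw [this, one_mul]
  rw [this]
  exact aux_sumZ t ht

-- Splitting an even sum over ℤ
lemma aux_split (f : ℤ → ℝ) (hf : Summable f) (he : ∀ k, f (-k) = f k) :
    ∑' k : ℤ, f k = f 0 + 2 * ∑' n : ℕ, f ((n:ℤ) + 1) := by
  have h1 : Summable (fun n : ℕ => f n) := hf.comp_injective (fun a b h => by exact_mod_cast h)
  have h2 : Summable (fun n : ℕ => f ((n:ℤ) + 1)) := by
    have := (summable_nat_add_iff 1).mpr h1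
    apply this.congr
    intro n; push_cast; ring_nf
  rw [← tsum_nat_add_neg_add_one hf]
  have : ∀ n : ℕ, f n + f (-((n:ℤ) + 1)) = f n + f ((n:ℤ)+1) := fun n => by rw [he]
  rw [tsum_congr this, Summable.tsum_add h1 h2, Summable.tsum_eq_zero_add h1]
  push_cast
  ring

-- Poisson summation for A
lemma aux_poissonA (a : ℝ) (ha : 0 < a) :
    ∑' k : ℤ, Real.exp (-a * (k:ℝ)^2)
      = (π/a)^((1:ℝ)/2) * ∑' n : ℤ, Real.exp (-(π^2/a) * (n:ℝ)^2) := by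
  have hpi := Real.pi_pos
  have h := Real.tsum_exp_neg_mul_int_sq (a := a/π) (by positivity)
  have e1 : ∀ n : ℤ, Real.exp (-π * (a/π) * (n:ℝ)^2) = Real.exp (-a * (n:ℝ)^2) := by
    intro n; congr 1; field_simp
  have e2 : ∀ n : ℤ, Real.exp (-π / (a/π) * (n:ℝ)^2) = Real.exp (-(π^2/a) * (n:ℝ)^2) := by
    intro n; congr 1; rw [div_div_eq_mul_div]; ring
  rw [tsum_congr e1, tsum_congr e2] at h
  rw [h, one_div, ← Real.inv_rpow (by positivity), inv_div]

-- Poisson summation for B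
lemma aux_poissonB (a : ℝ) (ha : 0 < a) :
    ∑' k : ℤ, Real.exp (-a * ((k:ℝ) + 1/2)^2)
      = (π/a)^((1:ℝ)/2) * ∑' n : ℤ, (-1:ℝ)^n * Real.exp (-(π^2/a) * (n:ℝ)^2) := by
  have hpi := Real.pi_pos
  have hc : (0:ℝ) < π / a := by positivity
  have h := Complex.tsum_exp_neg_quadratic (a := ((π/a : ℝ) : ℂ))
    (by rwa [Complex.ofReal_re]) (-(Complex.I/2))
  have hm1 : Complex.exp (-((π:ℂ) * Complex.I)) = -1 := by
    rw [Complex.exp_neg, Complex.exp_pi_mul_I]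
    norm_num
  have e1 : ∀ n : ℤ, Complex.exp (-(π:ℂ) * ((π/a:ℝ):ℂ) * (n:ℂ)^2
        + 2*(π:ℂ)*(-(Complex.I/2))*(n:ℂ))
      = (((-1:ℝ)^n * Real.exp (-(π^2/a) * (n:ℝ)^2) : ℝ) : ℂ) := by
    intro n
    have harg : (-(π:ℂ) * ((π/a:ℝ):ℂ) * (n:ℂ)^2 + 2*(π:ℂ)*(-(Complex.I/2))*(n:ℂ))
        = ((-(π^2/a) * (n:ℝ)^2 : ℝ) : ℂ) + (n:ℤ) * (-((π:ℂ) * Complex.I)) := by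
      push_cast
      have ha' : (a:ℂ) ≠ 0 := by exact_mod_cast ha.ne'
      field_simp
    rw [harg, Complex.exp_add, Complex.exp_int_mul, hm1]
    push_cast
    ring
  have e2 : ∀ n : ℤ, Complex.exp (-(π:ℂ) / ((π/a:ℝ):ℂ)
        * ((n:ℂ) + Complex.I*(-(Complex.I/2)))^2)
      = ((Real.exp (-a * ((n:ℝ) + 1/2)^2) : ℝ) : ℂ) := by
    intro n
    have h1 : -(π:ℂ) / ((π/a:ℝ):ℂ) = ((-a : ℝ):ℂ) := by
      have ha' : (a:ℂ) ≠ 0 := by exact_mod_cast ha.ne'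
      have hp' : (π:ℂ) ≠ 0 := by exact_mod_cast hpi.ne'
      push_cast
      field_simp
    have h2 : (n:ℂ) + Complex.I*(-(Complex.I/2)) = (((n:ℝ) + 1/2 : ℝ):ℂ) := by
      push_cast
      linear_combination (-(1:ℂ)/2) * Complex.I_sq
    rw [h1, h2, ← Complex.ofReal_pow, ← Complex.ofReal_mul, Complex.ofReal_exp]
  rw [tsum_congr e1, tsum_congr e2] at h
  have hcpow : ((π/a:ℝ):ℂ) ^ ((1:ℂ)/2) = (((π/a)^((1:ℝ)/2) : ℝ) : ℂ) := by
    rw [Complex.ofReal_cpow hc.le]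
    norm_num
  rw [hcpow, ← Complex.ofReal_tsum, ← Complex.ofReal_tsum] at h
  have hr : (∑' n : ℤ, (-1:ℝ)^n * Real.exp (-(π^2/a) * (n:ℝ)^2))
      = (1/(π/a)^((1:ℝ)/2)) * ∑' k : ℤ, Real.exp (-a * ((k:ℝ) + 1/2)^2) := by
    exact_mod_cast h
  rw [hr, ← mul_assoc, mul_one_div, div_self (by positivity), one_mul]

lemma aux_sumN' (t c : ℝ) (ht : 0 < t) (hc : 0 ≤ c) :
    Summable (fun n : ℕ => (-1:ℝ)^n * Real.exp (-t * ((n:ℝ) + c)^2)) := by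
  apply Summable.of_abs
  have : (fun n : ℕ => |(-1:ℝ)^n * Real.exp (-t * ((n:ℝ) + c)^2)|)
      = fun n : ℕ => Real.exp (-t * ((n:ℝ) + c)^2) := by
    funext n
    rw [abs_mul, abs_pow, abs_neg, abs_one, one_pow, one_mul, abs_of_pos (Real.exp_pos _)]
  rw [this]
  exact aux_sumN t c ht hc

lemma aux_splitA (t : ℝ) (ht : 0 < t) :
    ∑' k : ℤ, Real.exp (-t * (k:ℝ)^2)
      = 1 + 2 * (Real.exp (-t) + ∑' n : ℕ, Real.exp (-t * ((n:ℝ)+2)^2)) := by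
  rw [aux_split _ (aux_sumZ t ht) (fun k => by push_cast; ring_nf)]
  have e1 : ∀ n : ℕ, Real.exp (-t * ((((n:ℤ)+1):ℤ):ℝ)^2)
      = Real.exp (-t * ((n:ℝ)+1)^2) := fun n => by push_cast; ring_nf
  rw [tsum_congr e1, Summable.tsum_eq_zero_add (aux_sumN t 1 ht zero_le_one)]
  have e2 : ∀ n : ℕ, Real.exp (-t * (((n+1:ℕ):ℝ)+1)^2)
      = Real.exp (-t * ((n:ℝ)+2)^2) := fun n => by push_cast; ring_nf
  rw [tsum_congr e2]
  norm_num

lemma aux_splitB (t : ℝ) (ht : 0 < t) :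
    ∑' k : ℤ, (-1:ℝ)^k * Real.exp (-t * (k:ℝ)^2)
      = 1 + 2 * (-Real.exp (-t) + ∑' n : ℕ, (-1:ℝ)^n * Real.exp (-t * ((n:ℝ)+2)^2)) := by
  have heven : ∀ k : ℤ, (-1:ℝ)^(-k) * Real.exp (-t * ((-k:ℤ):ℝ)^2)
      = (-1:ℝ)^k * Real.exp (-t * (k:ℝ)^2) := by
    intro k
    have h1 : (-1:ℝ)^(-k) = (-1:ℝ)^k := by
      rcases Int.even_or_odd k with h | h
      · rw [h.neg_one_zpow, (h.neg).neg_one_zpow]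
      · rw [h.neg_one_zpow, (h.neg).neg_one_zpow]
    rw [h1]
    push_cast
    ring_nf
  rw [aux_split _ (aux_sumZ' t ht) heven]
  have e1 : ∀ n : ℕ, (-1:ℝ)^((n:ℤ)+1) * Real.exp (-t * ((((n:ℤ)+1):ℤ):ℝ)^2)
      = -((-1:ℝ)^n * Real.exp (-t * ((n:ℝ)+1)^2)) := by
    intro n
    rw [zpow_add_one₀ (by norm_num : (-1:ℝ) ≠ 0), zpow_natCast]
    push_cast
    ring_nf
  rw [tsum_congr e1, tsum_neg, Summable.tsum_eq_zero_add (aux_sumN' t 1 ht zero_le_one)]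
  have e2 : ∀ n : ℕ, (-1:ℝ)^(n+1) * Real.exp (-t * (((n+1:ℕ):ℝ)+1)^2)
      = -((-1:ℝ)^n * Real.exp (-t * ((n:ℝ)+2)^2)) := by
    intro n
    rw [pow_succ]
    push_cast
    ring_nf
  rw [tsum_congr e2, tsum_neg]
  norm_num
  ring

lemma aux_U1_le (t : ℝ) (ht : 0 < t) :
    ∑' n : ℕ, Real.exp (-t * ((n:ℝ)+2)^2)
      ≤ Real.exp (-t)^4 * (1 - Real.exp (-t))⁻¹ := by
  have hq1 : Real.exp (-t) < 1 := Real.exp_lt_one_iff.mpr (neg_lt_zero.mpr ht)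
  have hgeo : Summable (fun n : ℕ => Real.exp (-t)^n * Real.exp (-t)^4) :=
    (summable_geometric_of_lt_one (Real.exp_pos _).le hq1).mul_right _
  have hle : ∀ n : ℕ, Real.exp (-t * ((n:ℝ)+2)^2) ≤ Real.exp (-t)^n * Real.exp (-t)^4 := by
    intro n
    rw [← pow_add, ← Real.exp_nat_mul]
    apply Real.exp_le_exp.mpr
    push_cast
    nlinarith [mul_nonneg ht.le (show (0:ℝ) ≤ (n:ℝ)^2 + 3*(n:ℝ) by positivity)]
  calc ∑' n : ℕ, Real.exp (-t * ((n:ℝ)+2)^2)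
      ≤ ∑' n : ℕ, Real.exp (-t)^n * Real.exp (-t)^4 :=
        Summable.tsum_le_tsum hle (aux_sumN t 2 ht (by norm_num)) hgeo
    _ = Real.exp (-t)^4 * (1 - Real.exp (-t))⁻¹ := by
        rw [tsum_mul_right, tsum_geometric_of_lt_one (Real.exp_pos _).le hq1]
        ring

lemma aux_U2_abs (t : ℝ) (ht : 0 < t) :
    |∑' n : ℕ, (-1:ℝ)^n * Real.exp (-t * ((n:ℝ)+2)^2)|
      ≤ ∑' n : ℕ, Real.exp (-t * ((n:ℝ)+2)^2) := by
  have h := norm_tsum_le_tsum_norm (f := fun n : ℕ => (-1:ℝ)^n * Real.exp (-t * ((n:ℝ)+2)^2)) ?_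
  · refine h.trans_eq (tsum_congr fun n => ?_)
    rw [Real.norm_eq_abs, abs_mul, abs_pow, abs_neg, abs_one, one_pow, one_mul,
      abs_of_pos (Real.exp_pos _)]
  · apply Summable.congr (aux_sumN t 2 ht (by norm_num))
    intro n
    rw [Real.norm_eq_abs, abs_mul, abs_pow, abs_neg, abs_one, one_pow, one_mul,
      abs_of_pos (Real.exp_pos _)]

-- Key asymptotic
lemma aux_key :
    Tendsto (fun t : ℝ =>
      ((∑' k : ℤ, Real.exp (-t * (k:ℝ)^2)) /
        (∑' k : ℤ, (-1:ℝ)^k * Real.exp (-t * (k:ℝ)^2)) - 1) / Real.exp (-t))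
      atTop (nhds 4) := by
  have hq0 : Tendsto (fun t : ℝ => Real.exp (-t)) atTop (nhds 0) :=
    Real.tendsto_exp_neg_atTop_nhds_zero
  have hinv : Tendsto (fun t : ℝ => (1 - Real.exp (-t))⁻¹) atTop (nhds 1) := by
    have := (tendsto_const_nhds (x := (1:ℝ)).sub hq0).inv₀ (by norm_num)
    simpa using this
  have h3 : Tendsto (fun t : ℝ => 2 * (Real.exp (-t)^3 * (1 - Real.exp (-t))⁻¹))
      atTop (nhds 0) := by
    have := (((hq0.pow 3).mul hinv).const_mul 2)
    simpa using this
  have h4 : Tendsto (fun t : ℝ => Real.exp (-t) + Real.exp (-t)^4 * (1 - Real.exp (-t))⁻¹)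
      atTop (nhds 0) := by
    have := hq0.add ((hq0.pow 4).mul hinv)
    simpa using this
  have hr : Tendsto (fun t : ℝ =>
      ((∑' n : ℕ, Real.exp (-t * ((n:ℝ)+2)^2))
        - ∑' n : ℕ, (-1:ℝ)^n * Real.exp (-t * ((n:ℝ)+2)^2)) / Real.exp (-t))
      atTop (nhds 0) := by
    apply squeeze_zero_norm' ?_ h3
    filter_upwards [eventually_gt_atTop 0] with t ht
    have hU1 := aux_U1_le t ht
    have hU2 := aux_U2_abs t ht
    have hU1pos : 0 ≤ ∑' n : ℕ, Real.exp (-t * ((n:ℝ)+2)^2) :=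
      tsum_nonneg fun n => (Real.exp_pos _).le
    have hqpos : 0 < Real.exp (-t) := Real.exp_pos _
    rw [Real.norm_eq_abs, abs_div, abs_of_pos hqpos, div_le_iff₀ hqpos]
    calc |(∑' n : ℕ, Real.exp (-t * ((n:ℝ)+2)^2))
          - ∑' n : ℕ, (-1:ℝ)^n * Real.exp (-t * ((n:ℝ)+2)^2)|
        ≤ |∑' n : ℕ, Real.exp (-t * ((n:ℝ)+2)^2)|
          + |∑' n : ℕ, (-1:ℝ)^n * Real.exp (-t * ((n:ℝ)+2)^2)| := abs_sub _ _
      _ ≤ Real.exp (-t)^4 * (1 - Real.exp (-t))⁻¹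
          + Real.exp (-t)^4 * (1 - Real.exp (-t))⁻¹ := by
          apply add_le_add
          · rwa [abs_of_nonneg hU1pos]
          · exact hU2.trans hU1
      _ = 2 * (Real.exp (-t)^3 * (1 - Real.exp (-t))⁻¹) * Real.exp (-t) := by ring
  have hD : Tendsto (fun t : ℝ =>
      -Real.exp (-t) + ∑' n : ℕ, (-1:ℝ)^n * Real.exp (-t * ((n:ℝ)+2)^2))
      atTop (nhds 0) := by
    apply squeeze_zero_norm' ?_ h4
    filter_upwards [eventually_gt_atTop 0] with t ht
    have hU1 := aux_U1_le t ht
    have hU2 := aux_U2_abs t ht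
    have hqpos : 0 < Real.exp (-t) := Real.exp_pos _
    rw [Real.norm_eq_abs]
    calc |-Real.exp (-t) + ∑' n : ℕ, (-1:ℝ)^n * Real.exp (-t * ((n:ℝ)+2)^2)|
        ≤ |-Real.exp (-t)| + |∑' n : ℕ, (-1:ℝ)^n * Real.exp (-t * ((n:ℝ)+2)^2)| :=
          abs_add_le _ _
      _ ≤ Real.exp (-t) + Real.exp (-t)^4 * (1 - Real.exp (-t))⁻¹ := by
          apply add_le_add
          · rw [abs_neg, abs_of_pos hqpos]
          · exact hU2.trans hU1
  have hS2 : Tendsto (fun t : ℝ => ∑' k : ℤ, (-1:ℝ)^k * Real.exp (-t * (k:ℝ)^2))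
      atTop (nhds 1) := by
    have h := tendsto_const_nhds (x := (1:ℝ)).add (hD.const_mul 2)
    rw [show (1:ℝ) + 2 * 0 = 1 from by norm_num] at h
    apply Tendsto.congr' ?_ h
    filter_upwards [eventually_gt_atTop 0] with t ht
    exact (aux_splitB t ht).symm
  have hS2pos : ∀ᶠ t : ℝ in atTop,
      1/2 < ∑' k : ℤ, (-1:ℝ)^k * Real.exp (-t * (k:ℝ)^2) :=
    hS2.eventually (lt_mem_nhds (by norm_num))
  have main : Tendsto (fun t : ℝ =>
      (4 + 2 * (((∑' n : ℕ, Real.exp (-t * ((n:ℝ)+2)^2))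
        - ∑' n : ℕ, (-1:ℝ)^n * Real.exp (-t * ((n:ℝ)+2)^2)) / Real.exp (-t)))
        / ∑' k : ℤ, (-1:ℝ)^k * Real.exp (-t * (k:ℝ)^2))
      atTop (nhds 4) := by
    have h := (tendsto_const_nhds (x := (4:ℝ)).add (hr.const_mul 2)).div hS2 one_ne_zero
    rw [show ((4:ℝ) + 2 * 0) / 1 = 4 by norm_num] at h
    exact h
  apply main.congr'
  filter_upwards [eventually_gt_atTop 0, hS2pos] with t ht hS
  have hq : Real.exp (-t) ≠ 0 := (Real.exp_pos _).ne'
  have hS0 : (∑' k : ℤ, (-1:ℝ)^k * Real.exp (-t * (k:ℝ)^2)) ≠ 0 := by linarith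
  rw [aux_splitA t ht, div_sub_one hS0, div_div,
    div_eq_div_iff hS0 (mul_ne_zero hS0 hq)]
  rw [aux_splitB t ht] at hS0 ⊢
  field_simp
  ring

theorem theta_ratio_asymptotics :
    Tendsto
      (fun a : ℝ =>
        ((∑' k : ℤ, Real.exp (-a * (k : ℝ) ^ 2)) /
            (∑' k : ℤ, Real.exp (-a * ((k : ℝ) + 1 / 2) ^ 2)) - 1) /
          Real.exp (-(π ^ 2) / a))
      (nhdsWithin 0 (Set.Ioi 0)) (nhds 4) := by
  have hcomp : Tendsto (fun a : ℝ => π^2 / a) (nhdsWithin 0 (Set.Ioi 0)) atTop := by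
    have h := Tendsto.const_mul_atTop (show (0:ℝ) < π^2 by positivity)
      (tendsto_inv_nhdsGT_zero (𝕜 := ℝ))
    apply h.congr
    intro a
    rw [div_eq_mul_inv]
  have h := aux_key.comp hcomp
  apply h.congr'
  filter_upwards [self_mem_nhdsWithin] with a (ha : a ∈ Set.Ioi (0:ℝ))
  have ha' : 0 < a := ha
  simp only [Function.comp_apply]
  rw [aux_poissonA a ha', aux_poissonB a ha',
    mul_div_mul_left _ _ (by positivity : (π/a)^((1:ℝ)/2) ≠ 0),
    show -(π^2)/a = -(π^2/a) from by ring]
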